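/- The sequence $h_k$ defined by $h_k = 1$ for $k \le 1$, $h_2 = d/2$ (with $d \ge 3$), and $h_k = \frac{1}{2}(h_{k-1} + \cdots + h_{k-d})$ for $k \ge 3$ is (weakly) increasing in $k$. -/

import Mathlib

theorem stmt1 (d : ℕ) (hd : 3 ≤ d) (h : ℤ → ℝ)
    (h1 : ∀ k : ℤ, k ≤ 1 → h k = 1)
    (h2 : h 2 = d / 2)
    (hrec : ∀ k : ℤ, 3 ≤ k → h k = (1 / 2) * ∑ i ∈ Finset.Icc 1 d, h (k - i)) :
    Monotone h := by
  have hdR : (3:ℝ) ≤ (d:ℝ) := by exact_mod_cast hd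
  obtain ⟨e, rfl⟩ : ∃ e, d = e + 1 := ⟨d - 1, by omega⟩
  have key : ∀ k : ℤ, 3 ≤ k → h (k+1) - h k = (1/2) * (h k - h (k - (e+1))) := by
    intro k hk
    have hB : ∑ i ∈ Finset.Icc 1 (e+1), h (k - i)
        = (∑ i ∈ Finset.Icc 1 e, h (k - i)) + h (k - (e+1)) := by
      rw [Finset.sum_Icc_succ_top (by omega)]
      norm_num
    have l1 : ∀ n : ℕ, ∑ i ∈ Finset.Icc 1 n, h (k + 1 - i)
        = ∑ j ∈ Finset.range n, h (k - j) := by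
      intro n
      induction n with
      | zero => simp
      | succ m ih =>
        rw [Finset.sum_Icc_succ_top (by omega), ih, Finset.sum_range_succ]
        congr 2
        push_cast
        ring
    have l2 : ∀ n : ℕ, ∑ i ∈ Finset.Icc 1 n, h (k - i)
        = ∑ j ∈ Finset.range n, h (k - (j+1)) := by
      intro n
      induction n with
      | zero => simp
      | succ m ih =>
        rw [Finset.sum_Icc_succ_top (by omega), ih, Finset.sum_range_succ]
        congr 2 <;> push_cast <;> ring
    have hA : ∑ i ∈ Finset.Icc 1 (e+1), h (k + 1 - i)
        = h k + ∑ i ∈ Finset.Icc 1 e, h (k - i) := by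
      rw [l1, Finset.sum_range_succ', l2]
      simp only [Nat.cast_zero, sub_zero]
      push_cast
      exact add_comm _ _
    have hk1 := hrec (k+1) (by omega)
    have hk0 := hrec k hk
    rw [hA] at hk1
    rw [hB] at hk0
    set S := ∑ i ∈ Finset.Icc 1 e, h (k - i)
    linarith
  set d := e + 1 with hde
  have base : ∀ k : ℤ, k ≤ 2 → h k ≤ h (k+1) := by
    intro k hk
    rcases lt_or_eq_of_le hk with hk' | rfl
    · rcases lt_or_eq_of_le (by omega : k ≤ 1) with hk'' | rfl
      · rw [h1 k (by omega), h1 (k+1) (by omega)]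
      · rw [h1 1 le_rfl]
        rw [show (1:ℤ)+1 = 2 by norm_num, h2]
        linarith
    · -- k = 2
      rw [show (2:ℤ) + 1 = 3 by norm_num, hrec 3 le_rfl]
      have hs : ∑ i ∈ Finset.Icc 1 d, h (3 - i) = (d:ℝ)/2 + ((d:ℝ) - 1) := by
        have hco : ∀ i ∈ Finset.Icc 1 d, h (3 - (i:ℤ))
            = (if i = 1 then (d:ℝ)/2 - 1 else 0) + 1 := by
          intro i hi
          simp only [Finset.mem_Icc] at hi
          by_cases hi1 : i = 1
          · subst hi1
            rw [if_pos rfl, show ((3:ℤ) - ((1:ℕ):ℤ)) = 2 by norm_num, h2]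
            ring
          · rw [if_neg hi1, h1 (3 - i) (by omega)]; ring
        rw [Finset.sum_congr rfl hco, Finset.sum_add_distrib,
          Finset.sum_ite_eq' (Finset.Icc 1 d) 1 (fun _ => (d:ℝ)/2 - 1)]
        simp [Nat.card_Icc, hd, Finset.mem_Icc]
        push_cast [hde]
        ring
      rw [hs, h2]
      linarith
  have Q : ∀ n : ℤ, 2 ≤ n → ∀ k ≤ n, h k ≤ h (k+1) := by
    refine Int.le_induction (fun k hk => base k hk) ?_
    intro n hn ih k hk
    rcases lt_or_eq_of_le hk with hk' | rfl
    · exact ih k (by omega)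
    · have chain : ∀ b : ℤ, n + 1 - (e+1) ≤ b → b ≤ n + 1 → h (n + 1 - (e+1)) ≤ h b := by
        intro b hab
        refine Int.le_induction (motive := fun b _ => b ≤ n + 1 → h (n + 1 - ((e:ℤ)+1)) ≤ h b)
          (fun _ => le_rfl) ?_ b hab
        intro b hb ih2 hbn
        exact le_trans (ih2 (by omega)) (ih b (by omega))
      have hdiff := key (n+1) (by omega)
      have hmon := chain (n+1) (by push_cast; omega) le_rfl
      linarith
  have step : ∀ k : ℤ, h k ≤ h (k+1) := by
    intro k
    rcases le_or_gt k 2 with hk | hk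
    · exact base k hk
    · exact Q k (by omega) k le_rfl
  exact monotone_int_of_le_succ step
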